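/- Let G be a group of continuous functions on a locally compact space S with positive cone of strictly positive functions (plus 0), containing for each n,m ∈ ℤ the functions h_{n,±}(x) = 1_∓(π(x))·e^{nπ(x)} and closed under the automorphism α(g) = e^{−π}·g. Suppose J is a nonzero order ideal of G with α(J) = J, and suppose there is g ∈ J ∩ G⁺ \ {0} and n,m,K ∈ ℕ such that 0 < 1₋∘π·e^{nπ} + 1₊∘π·e^{−mπ} < K·g pointwise. If additionally for every g' ∈ G⁺ there exist l₁,l₂ ∈ ℤ and M ∈ ℕ with g'(x) < M(α^{l₁}(g₀)(x) + α^{l₂}(g₀)(x)) for all x, where g₀ = 1₋∘π·e^{nπ} + 1₊∘π·e^{−mπ}, then J = G. -/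

import Mathlib

/-- If `J` is a nonzero `α`-invariant order ideal of `G` (a group of
continuous functions with the strict pointwise cone, `α(g) = e^{−π}·g`) containing a
strictly positive `g` dominating `g₀ = 1₋∘π·e^{nπ} + 1₊∘π·e^{−mπ}` in the sense
`0 < g₀ < K·g`, and every strictly positive element of `G` is dominated by
`M(α^{l₁}(g₀) + α^{l₂}(g₀))` for suitable `l₁, l₂, M`, then `J = G`. -/
theorem stmt_17 {S : Type*} [TopologicalSpace S] [LocallyCompactSpace S]
    (π : C(S, ℝ)) (h0 : ∀ x, π x ≠ 0)
    (G J : AddSubgroup C(S, ℝ)) (hJG : J ≤ G)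
    (hGdecomp : ∀ f ∈ G, ∃ a ∈ G, ∃ b ∈ G,
      (∀ x, 0 < a x) ∧ (∀ x, 0 < b x) ∧ f = a - b)
    (hJdecomp : ∀ f ∈ J, ∃ a ∈ J, ∃ b ∈ J,
      ((a = 0) ∨ ∀ x, 0 < a x) ∧ ((b = 0) ∨ ∀ x, 0 < b x) ∧ f = a - b)
    (hJhered : ∀ f g : C(S, ℝ), f ∈ J → ((g = 0) ∨ ∀ x, 0 < g x) →
      ((f - g = 0) ∨ ∀ x, 0 < (f - g) x) → g ∈ J)
    (hαJ : ∀ g g' : C(S, ℝ),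
      (∀ x, g' x = Real.exp (-(π x)) * g x) → (g ∈ J ↔ g' ∈ J))
    (g : C(S, ℝ)) (hgJ : g ∈ J) (hgpos : ∀ x, 0 < g x)
    (n m : ℤ) (K : ℕ) (g₀ : C(S, ℝ)) (hg₀G : g₀ ∈ G)
    (hg₀def : ∀ x, g₀ x =
      (if π x ≤ 0 then Real.exp (n * π x) else 0) +
        (if 0 ≤ π x then Real.exp (-(m * π x)) else 0))
    (hg₀dom : ∀ x, 0 < g₀ x ∧ g₀ x < K * g x)
    (hdom : ∀ g' ∈ G, (∀ x, 0 < g' x) →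
      ∃ (l₁ l₂ : ℤ) (M : ℕ), ∀ x, g' x <
        M * (Real.exp (-(l₁ * π x)) * g₀ x + Real.exp (-(l₂ * π x)) * g₀ x)) :
    ∀ f ∈ G, f ∈ J := by
  -- g₀ ∈ J
  have hKg : (K • g : C(S, ℝ)) ∈ J := AddSubgroup.nsmul_mem J hgJ K
  have hg₀J : g₀ ∈ J := by
    refine hJhered (K • g) g₀ hKg (Or.inr fun x => (hg₀dom x).1) (Or.inr fun x => ?_)
    have h1 := (hg₀dom x).2
    have h2 : (K • g - g₀ : C(S, ℝ)) x = K * g x - g₀ x := by simp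
    linarith
  -- the family E l = e^{-lπ}·g₀
  set E : ℤ → C(S, ℝ) := fun l =>
    ⟨fun x => Real.exp (-(l * π x)) * g₀ x, by fun_prop⟩ with hE
  have hEapp : ∀ (l : ℤ) x, E l x = Real.exp (-(l * π x)) * g₀ x := fun _ _ => rfl
  have hEJ : ∀ l : ℤ, E l ∈ J := by
    intro l
    induction l using Int.induction_on with
    | zero =>
      have : E 0 = g₀ := by
        ext x; simp [hEapp]
      rw [this]; exact hg₀J
    | succ k ih =>
      refine (hαJ (E k) (E (k + 1)) fun x => ?_).mp ih
      rw [hEapp, hEapp, ← mul_assoc, ← Real.exp_add]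
      congr 2
      push_cast; ring
    | pred k ih =>
      show E (-k - 1) ∈ J
      refine (hαJ (E (-k - 1)) (E (-k)) fun x => ?_).mpr ih
      rw [hEapp, hEapp, ← mul_assoc, ← Real.exp_add]
      congr 2
      push_cast; ring
  -- any strictly positive element of G is in J
  have hposJ : ∀ a ∈ G, (∀ x, 0 < a x) → a ∈ J := by
    intro a haG hapos
    obtain ⟨l₁, l₂, M, hM⟩ := hdom a haG hapos
    have hsum : (M • (E l₁ + E l₂) : C(S, ℝ)) ∈ J :=
      AddSubgroup.nsmul_mem J (J.add_mem (hEJ l₁) (hEJ l₂)) M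
    refine hJhered (M • (E l₁ + E l₂)) a hsum (Or.inr hapos) (Or.inr fun x => ?_)
    have h1 := hM x
    have h2 : (M • (E l₁ + E l₂) - a : C(S, ℝ)) x
        = M * (Real.exp (-(l₁ * π x)) * g₀ x + Real.exp (-(l₂ * π x)) * g₀ x) - a x := by
      simp [hEapp]; ring
    linarith
  intro f hfG
  obtain ⟨a, haG, b, hbG, hapos, hbpos, hfab⟩ := hGdecomp f hfG
  rw [hfab]
  exact J.sub_mem (hposJ a haG hapos) (hposJ b hbG hbpos)
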